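/- Every locally compact Hausdorff rectifiable space is a normal topological space. -/

import Mathlib

/-- Every locally compact Hausdorff rectifiable space is normal. -/
theorem normal_of_locallyCompact_rectifiable
    {G : Type*} [TopologicalSpace G] [T2Space G] [LocallyCompactSpace G]
    (e : G) (p q : G × G → G)
    (hp : Continuous p) (hq : Continuous q)
    (hpq : ∀ x y : G, p (x, q (x, y)) = y)
    (hqp : ∀ x y : G, q (x, p (x, y)) = y)
    (hqe : ∀ x : G, q (x, x) = e) :
    NormalSpace G := by
  classical
  obtain ⟨K, hKc, hKe⟩ := exists_compact_mem_nhds e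
  have heK : e ∈ K := mem_of_mem_nhds hKe
  -- a symmetric reflexive relation with compact "steps"
  set r : G → G → Prop := fun x y => q (x, y) ∈ K ∧ q (y, x) ∈ K with hr
  have hrefl : ∀ x, r x x := fun x => by simp [hr, hqe x, heK]
  have hsymm : ∀ {x y}, r x y → r y x := fun h => ⟨h.2, h.1⟩
  -- its chain equivalence relation
  set R : G → G → Prop := fun x y => Relation.ReflTransGen r x y with hR
  have hRsymm : ∀ {x y}, R x y → R y x := fun {x y} h =>
    (@Relation.ReflTransGen.symmetric _ r ⟨fun a b hab => hsymm hab⟩).symm _ _ h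
  -- each point has a neighborhood of points related to it in one step
  have hW : ∀ y : G, {z | r y z} ∈ nhds y := by
    intro y
    have h1 : ContinuousAt (fun z => q (y, z)) y :=
      (hq.comp (continuous_const.prodMk continuous_id)).continuousAt
    have h2 : ContinuousAt (fun z => q (z, y)) y :=
      (hq.comp (continuous_id.prodMk continuous_const)).continuousAt
    have m1 : (fun z => q (y, z)) ⁻¹' K ∈ nhds y := by
      apply h1.preimage_mem_nhds; simpa [hqe y] using hKe
    have m2 : (fun z => q (z, y)) ⁻¹' K ∈ nhds y := by
      apply h2.preimage_mem_nhds; simpa [hqe y] using hKe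
    filter_upwards [m1, m2] with z h₁ h₂ using ⟨h₁, h₂⟩
  -- equivalence classes are open
  have hopen : ∀ x, IsOpen {y | R x y} := by
    intro x
    rw [isOpen_iff_mem_nhds]
    intro y hy
    filter_upwards [hW y] with z hz using Relation.ReflTransGen.tail hy hz
  -- equivalence classes are closed
  have hclosed : ∀ x, IsClosed {y | R x y} := by
    intro x
    rw [← isOpen_compl_iff, isOpen_iff_mem_nhds]
    intro y hy
    filter_upwards [hW y] with z hz
    intro hzR
    exact hy (Relation.ReflTransGen.tail hzR (hsymm hz))
  -- equivalence classes are σ-compact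
  have hsig : ∀ x, IsSigmaCompact {y | R x y} := by
    intro x
    let Cs : ℕ → Set G := fun n =>
      Nat.rec {x} (fun _ S => (fun ab : G × G => p ab) '' (S ×ˢ K)) n
    have hCs : ∀ n, IsCompact (Cs n) := by
      intro n
      induction n with
      | zero => exact isCompact_singleton
      | succ n ih => exact (ih.prod hKc).image hp
    have hsub : ∀ y, R x y → ∃ n, y ∈ Cs n := by
      intro y h
      induction h with
      | refl => exact ⟨0, rfl⟩
      | @tail b c hxb hbc ih =>
        obtain ⟨n, hb⟩ := ih
        exact ⟨n + 1, ⟨(b, q (b, c)), ⟨hb, hbc.1⟩, hpq b c⟩⟩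
    refine ⟨fun n => {y | R x y} ∩ Cs n, fun n => (hCs n).inter_left (hclosed x), ?_⟩
    apply Set.Subset.antisymm
    · exact Set.iUnion_subset fun n => Set.inter_subset_left
    · intro y hy
      obtain ⟨n, hn⟩ := hsub y hy
      exact Set.mem_iUnion.2 ⟨n, hy, hn⟩
  -- each class, as a subspace, is normal; extract a separation lemma per class
  have key : ∀ x : G, ∀ s t : Set G, IsClosed s → IsClosed t → Disjoint s t →
      ∃ U V : Set G, IsOpen U ∧ IsOpen V ∧ s ∩ {y | R x y} ⊆ U ∧ t ∩ {y | R x y} ⊆ V ∧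
        U ⊆ {y | R x y} ∧ V ⊆ {y | R x y} ∧ Disjoint U V := by
    intro x s t hs ht hst
    haveI : LocallyCompactSpace {y | R x y} := (hclosed x).locallyCompactSpace
    haveI : SigmaCompactSpace {y | R x y} := isSigmaCompact_iff_sigmaCompactSpace.1 (hsig x)
    have hsep : SeparatedNhds ((Subtype.val : {y | R x y} → G) ⁻¹' s)
        ((Subtype.val : {y | R x y} → G) ⁻¹' t) :=
      normal_separation (hs.preimage continuous_subtype_val)
        (ht.preimage continuous_subtype_val) (hst.preimage _)
    obtain ⟨u, v, hu, hv, hsu, htv, huv⟩ := hsep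
    refine ⟨Subtype.val '' u, Subtype.val '' v,
      (hopen x).isOpenMap_subtype_val u hu, (hopen x).isOpenMap_subtype_val v hv,
      ?_, ?_, ?_, ?_, ?_⟩
    · rintro y ⟨hys, hyR⟩
      exact ⟨⟨y, hyR⟩, hsu hys, rfl⟩
    · rintro y ⟨hyt, hyR⟩
      exact ⟨⟨y, hyR⟩, htv hyt, rfl⟩
    · rintro y ⟨z, _, rfl⟩; exact z.2
    · rintro y ⟨z, _, rfl⟩; exact z.2
    · rw [Set.disjoint_left]
      rintro y ⟨z, hz, rfl⟩ ⟨w, hw, hwz⟩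
      have : w = z := Subtype.ext hwz
      exact Set.disjoint_left.1 huv hz (this ▸ hw)
  -- glue the separations over the quotient by the equivalence relation
  let sd : Setoid G :=
    ⟨R, ⟨fun _ => Relation.ReflTransGen.refl, fun h => hRsymm h, fun h h' => h.trans h'⟩⟩
  refine ⟨fun s t hs ht hst => ?_⟩
  choose U V hUo hVo hsU htV hUc hVc hUV using
    fun i : Quotient sd => key i.out s t hs ht hst
  have hclass : ∀ y : G, R (⟦y⟧ : Quotient sd).out y := by
    intro y
    have : (⟦(⟦y⟧ : Quotient sd).out⟧ : Quotient sd) = ⟦y⟧ := Quotient.out_eq _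
    exact Quotient.exact this
  refine ⟨⋃ i, U i, ⋃ i, V i, isOpen_iUnion hUo, isOpen_iUnion hVo, ?_, ?_, ?_⟩
  · intro y hy
    exact Set.mem_iUnion.2 ⟨⟦y⟧, hsU _ ⟨hy, hclass y⟩⟩
  · intro y hy
    exact Set.mem_iUnion.2 ⟨⟦y⟧, htV _ ⟨hy, hclass y⟩⟩
  · rw [Set.disjoint_left]
    rintro y hyU hyV
    obtain ⟨i, hi⟩ := Set.mem_iUnion.1 hyU
    obtain ⟨j, hj⟩ := Set.mem_iUnion.1 hyV
    have hij : i = j := by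
      have h1 : R i.out y := hUc i hi
      have h2 : R j.out y := hVc j hj
      have : R i.out j.out := h1.trans (hRsymm h2)
      calc i = ⟦i.out⟧ := (Quotient.out_eq i).symm
        _ = ⟦j.out⟧ := Quotient.sound this
        _ = j := Quotient.out_eq j
    subst hij
    exact Set.disjoint_left.1 (hUV i) hi hj
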